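/- arXiv:1711.04874 — 3 statements merged into one kernel-verified Lean document; each statement's English description precedes it below -/
import Mathlib

section
/- Uniqueness of the constrained observability Gramian: let A ∈ ℝ^{d×d} and v ∈ ℝ^d, v ≠ 0, and suppose the matrix exponential exp(t·A) converges as t → ∞ to a limit E ∈ ℝ^{d×d} whose range is contained in the span of v. Let Q ∈ ℝ^{d×d} and suppose P₁, P₂ ∈ ℝ^{d×d} are symmetric matrices each satisfying Pᵢ·A + Aᵀ·Pᵢ + Q = 0 and Pᵢ·v = 0. Then P₁ = P₂. -/
open Matrix Filter Topology

lemma exp_mul_comm' {d : ℕ} (X Y D : Matrix (Fin d) (Fin d) ℝ) (h : X * D = D * Y) :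
    NormedSpace.exp X * D = D * NormedSpace.exp Y := by
  letI : SeminormedRing (Matrix (Fin d) (Fin d) ℝ) := Matrix.linftyOpSemiNormedRing
  letI : NormedRing (Matrix (Fin d) (Fin d) ℝ) := Matrix.linftyOpNormedRing
  letI : NormedAlgebra ℝ (Matrix (Fin d) (Fin d) ℝ) := Matrix.linftyOpNormedAlgebra
  have hpow : ∀ n : ℕ, X ^ n * D = D * Y ^ n := by
    intro n
    induction n with
    | zero => simp
    | succ n ih =>
      rw [pow_succ, pow_succ, mul_assoc, h, ← mul_assoc, ih, mul_assoc]
  have e1 : NormedSpace.exp X = ∑' n : ℕ, ((n.factorial : ℝ))⁻¹ • X ^ n := by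
    rw [NormedSpace.exp_eq_tsum ℝ]
  have e2 : NormedSpace.exp Y = ∑' n : ℕ, ((n.factorial : ℝ))⁻¹ • Y ^ n := by
    rw [NormedSpace.exp_eq_tsum ℝ]
  erw [e1, e2, ← (NormedSpace.expSeries_summable' (𝕂 := ℝ) X).tsum_mul_right D,
    ← (NormedSpace.expSeries_summable' (𝕂 := ℝ) Y).tsum_mul_left D]
  exact tsum_congr fun n => by rw [smul_mul_assoc, hpow, mul_smul_comm]

lemma exp_conj_eq_self {d : ℕ} (A D : Matrix (Fin d) (Fin d) ℝ)
    (hD : D * A + Aᵀ * D = 0) (t : ℝ) :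
    NormedSpace.exp (t • Aᵀ) * D * NormedSpace.exp (t • A) = D := by
  letI : SeminormedRing (Matrix (Fin d) (Fin d) ℝ) := Matrix.linftyOpSemiNormedRing
  letI : NormedRing (Matrix (Fin d) (Fin d) ℝ) := Matrix.linftyOpNormedRing
  letI : NormedAlgebra ℝ (Matrix (Fin d) (Fin d) ℝ) := Matrix.linftyOpNormedAlgebra
  have hAD : Aᵀ * D = -(D * A) := by
    rwa [add_comm, add_eq_zero_iff_eq_neg] at hD
  have hcomm : (t • Aᵀ) * D = D * ((-t) • A) := by
    rw [smul_mul_assoc, hAD, mul_smul_comm, neg_smul, smul_neg]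
  rw [exp_mul_comm' _ _ _ hcomm, mul_assoc,
    ← Matrix.exp_add_of_commute _ _ (((Commute.refl A).smul_left (-t)).smul_right t),
    ← add_smul, neg_add_cancel, zero_smul, NormedSpace.exp_zero, mul_one]

/-- **Uniqueness of the constrained observability Gramian** (Lemma 1, uniqueness part):
if `exp(tA)` converges as `t → ∞` to a matrix `E` whose range is contained in the span of a
nonzero vector `v`, then a symmetric solution of the Lyapunov equation
`P A + Aᵀ P + Q = 0` satisfying the additional constraint `P v = 0` is unique. -/
theorem constrained_gramian_unique {d : ℕ}
    (A : Matrix (Fin d) (Fin d) ℝ) (v : Fin d → ℝ) (hv : v ≠ 0)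
    (E : Matrix (Fin d) (Fin d) ℝ)
    (hE : Tendsto (fun t : ℝ => NormedSpace.exp (t • A)) atTop (nhds E))
    (hrange : ∀ x : Fin d → ℝ, ∃ c : ℝ, E.mulVec x = c • v)
    (Q : Matrix (Fin d) (Fin d) ℝ)
    (P₁ P₂ : Matrix (Fin d) (Fin d) ℝ)
    (hP₁symm : P₁.IsSymm) (hP₂symm : P₂.IsSymm)
    (hP₁ : P₁ * A + Aᵀ * P₁ + Q = 0) (hP₂ : P₂ * A + Aᵀ * P₂ + Q = 0)
    (hP₁v : P₁.mulVec v = 0) (hP₂v : P₂.mulVec v = 0) :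
    P₁ = P₂ := by
  set D := P₁ - P₂ with hDdef
  have hD : D * A + Aᵀ * D = 0 := by
    have h := sub_eq_zero_of_eq (hP₁.trans hP₂.symm)
    calc D * A + Aᵀ * D
        = (P₁ * A + Aᵀ * P₁ + Q) - (P₂ * A + Aᵀ * P₂ + Q) := by
          simp only [hDdef, sub_mul, mul_sub]; abel
      _ = 0 := by rw [hP₁, hP₂, sub_zero]
  -- exp(tAᵀ) D exp(tA) = D for all t
  have hkey : ∀ t : ℝ,
      (NormedSpace.exp (t • A))ᵀ * D * NormedSpace.exp (t • A) = D := by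
    intro t
    have := exp_conj_eq_self A D hD t
    rwa [show t • Aᵀ = (t • A)ᵀ by rw [transpose_smul], Matrix.exp_transpose] at this
  -- take limits
  have hlim : Tendsto (fun t : ℝ =>
      (NormedSpace.exp (t • A))ᵀ * D * NormedSpace.exp (t • A)) atTop
      (nhds (Eᵀ * D * E)) :=
    ((((continuous_id.matrix_transpose.tendsto E).comp hE).mul tendsto_const_nhds).mul hE)
  have hEDE : Eᵀ * D * E = D := by
    refine tendsto_nhds_unique hlim ?_
    simpa only [hkey] using (tendsto_const_nhds : Tendsto (fun _ : ℝ => D) atTop (nhds D))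
  have hDv : D.mulVec v = 0 := by
    rw [hDdef, sub_mulVec, hP₁v, hP₂v, sub_zero]
  have hDE : D * E = 0 := by
    have h0 : ∀ x, (D * E).mulVec x = 0 := by
      intro x
      obtain ⟨c, hc⟩ := hrange x
      rw [← Matrix.mulVec_mulVec, hc, Matrix.mulVec_smul, hDv, smul_zero]
    ext i j
    have := congrFun (h0 (Pi.single j 1)) i
    simpa [Matrix.mulVec_single] using this
  have : D = 0 := by
    rw [← hEDE, mul_assoc, hDE, mul_zero]
  have := sub_eq_zero.mp this
  exact this
end

section
/- Explicit observability Gramian of the network-reduced swing dynamics: let m, d ∈ ℝⁿ with mᵢ > 0 and dᵢ > 0, set M = diag(m), D = diag(d), let L ∈ ℝ^{n×n} be symmetric with L·𝟙 = 0, and form A = [[0, I], [−M⁻¹L, −M⁻¹D]] ∈ ℝ^{2n×2n} and Q = blkdiag(0, D). Then the symmetric matrix P = (1/2)·blkdiag(L, M) satisfies P·A + Aᵀ·P + Q = 0 and P·[𝟙; 0] = 0. Moreover, for any π ∈ ℝⁿ with πᵢ ≥ 0, Π = diag(π), and B = [0; M⁻¹ Π^{1/2}] ∈ ℝ^{2n×n},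 one has trace(Bᵀ P B) = (1/2) Σᵢ πᵢ/mᵢ. -/
open Matrix

/-- State matrix `A = [[0, I], [−M⁻¹L, −M⁻¹D]]` of the network-reduced swing dynamics. -/
noncomputable def swingA {n : ℕ} (m d : Fin n → ℝ) (L : Matrix (Fin n) (Fin n) ℝ) :
    Matrix (Fin n ⊕ Fin n) (Fin n ⊕ Fin n) ℝ :=
  Matrix.fromBlocks 0 1 (-(Matrix.diagonal (fun i => (m i)⁻¹) * L))
    (-(Matrix.diagonal (fun i => (m i)⁻¹) * Matrix.diagonal d))

/-- Input matrix `B = [0; M⁻¹ Π^{1/2}]`. -/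
noncomputable def swingB {n : ℕ} (m π : Fin n → ℝ) : Matrix (Fin n ⊕ Fin n) (Fin n) ℝ :=
  Matrix.fromRows 0
    (Matrix.diagonal (fun i => (m i)⁻¹) * Matrix.diagonal (fun i => Real.sqrt (π i)))

/-- Output weight `Q = CᵀC = blkdiag(0, D)` for the primary-control-effort output
`y = D^{1/2} ω`. -/
def swingQ {n : ℕ} (d : Fin n → ℝ) : Matrix (Fin n ⊕ Fin n) (Fin n ⊕ Fin n) ℝ :=
  Matrix.fromBlocks 0 0 0 (Matrix.diagonal d)

/-- Candidate observability Gramian `P = (1/2)·blkdiag(L, M)`. -/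
noncomputable def swingP {n : ℕ} (m : Fin n → ℝ) (L : Matrix (Fin n) (Fin n) ℝ) :
    Matrix (Fin n ⊕ Fin n) (Fin n ⊕ Fin n) ℝ :=
  ((1 : ℝ) / 2) • Matrix.fromBlocks L 0 0 (Matrix.diagonal m)

/-- **Explicit observability Gramian of the network-reduced swing dynamics**:
`P = (1/2) blkdiag(L, M)` solves `P A + Aᵀ P + Q = 0` with `P [𝟙; 0] = 0`, and
`trace(Bᵀ P B) = (1/2) Σᵢ πᵢ/mᵢ`. -/
theorem swing_gramian_explicit {n : ℕ}
    (m d : Fin n → ℝ) (hm : ∀ i, 0 < m i) (hd : ∀ i, 0 < d i)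
    (L : Matrix (Fin n) (Fin n) ℝ) (hLsymm : L.IsSymm)
    (hL1 : L.mulVec (fun _ => (1 : ℝ)) = 0)
    (π : Fin n → ℝ) (hπ : ∀ i, 0 ≤ π i) :
    swingP m L * swingA m d L + (swingA m d L)ᵀ * swingP m L + swingQ d = 0 ∧
    (swingP m L).mulVec (Sum.elim (fun _ => (1 : ℝ)) (fun _ => (0 : ℝ))) = 0 ∧
    Matrix.trace ((swingB m π)ᵀ * swingP m L * swingB m π) =
      (1 / 2) * ∑ i, π i / m i := by
  refine ⟨?_, ?_, ?_⟩
  · unfold swingP swingA swingQ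
    have hne : ∀ i, m i ≠ 0 := fun i => (hm i).ne'
    rw [smul_mul_assoc, mul_smul_comm, fromBlocks_transpose, fromBlocks_multiply,
      fromBlocks_multiply]
    ext (i|i) (j|j) <;>
      simp [Matrix.add_apply, Matrix.mul_apply, Matrix.diagonal_apply, hLsymm.apply,
        Finset.mul_sum, Finset.sum_ite_eq, Finset.sum_ite_eq'] <;>
      rcases eq_or_ne i j with h | h <;>
      field_simp [h, hne] <;>
      simp [h] <;>
      ring
  · unfold swingP
    rw [smul_mulVec, fromBlocks_mulVec]
    simp only [Sum.elim_comp_inl, Sum.elim_comp_inr, hL1, Matrix.zero_mulVec,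
      Matrix.mulVec_zero, add_zero, zero_add]
    ext (i|i) <;> simp [Matrix.mulVec, dotProduct]
  · unfold swingP swingB
    rw [transpose_fromRows, Matrix.mul_smul, Matrix.smul_mul,
      fromCols_mul_fromBlocks, fromCols_mul_fromRows]
    simp only [Matrix.mul_zero, Matrix.zero_mul, add_zero, zero_add, transpose_zero,
      Matrix.transpose_mul, diagonal_transpose, diagonal_mul_diagonal, Matrix.mul_assoc,
      trace_smul, trace_diagonal, smul_eq_mul]
    congr 1
    apply Finset.sum_congr rfl
    intro i _
    have h : Real.sqrt (π i) * Real.sqrt (π i) = π i := Real.mul_self_sqrt (hπ i)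
    field_simp [(hm i).ne']
    linear_combination h
end

section
/- Convex upper bound for generic performance metrics (Remark 1): let m, d, π ∈ ℝⁿ with mᵢ > 0, dᵢ > 0 and πᵢ ≥ 0, set M = diag(m), D = diag(d), Π = diag(π), and let L ∈ ℝ^{n×n} be symmetric positive semidefinite with kernel exactly the span of 𝟙. Let Q₁ ∈ ℝ^{n×n} be symmetric positive semidefinite with Q₁·𝟙 = 0 and let q₂ ∈ ℝⁿ with (q₂)ᵢ ≥ 0, and let C be any matrix with CᵀC = blkdiag(Q₁, diag(q₂)). With A = [[0, I], [−M⁻¹L, −M⁻¹D]] and B = [0; M⁻¹Π^{1/2}], for every T ≥ 0 one has ∫₀^T ‖C · exp(t·A) · B‖_F² dt ≤ (maxᵢ πᵢ) · (1/(2 minᵢ dᵢ)) · ( trace(L⁺ Q₁) + Σᵢ (q₂)ᵢ/mᵢ ); in particular the improper integral converges and obeys the same bound, which is convex in the inertia vector m. -/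
open Matrix MeasureTheory Filter Topology

/-- `Lp` is the Moore–Penrose pseudoinverse of `L` (the four Penrose conditions, which
determine it uniquely). -/
def IsMoorePenroseInv {n : ℕ} (L Lp : Matrix (Fin n) (Fin n) ℝ) : Prop :=
  L * Lp * L = L ∧ Lp * L * Lp = Lp ∧ (L * Lp)ᵀ = L * Lp ∧ (Lp * L)ᵀ = Lp * L

namespace SwingAux

open NormedSpace
open scoped MatrixOrder

variable {N : Type*} [Fintype N] [DecidableEq N]

theorem derivFentry (A Q : Matrix N N ℝ) (t : ℝ) (a b : N) :
    HasDerivAt (fun s : ℝ => ((exp (s • A))ᵀ * Q * exp (s • A)) a b)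
      ((Aᵀ * ((exp (t • A))ᵀ * Q * exp (t • A)) +
        ((exp (t • A))ᵀ * Q * exp (t • A)) * A) a b) t := by
  letI : SeminormedRing (Matrix N N ℝ) := Matrix.linftyOpSemiNormedRing
  letI : NormedRing (Matrix N N ℝ) := Matrix.linftyOpNormedRing
  letI : NormedAlgebra ℝ (Matrix N N ℝ) := Matrix.linftyOpNormedAlgebra
  have h1 : ∀ s : ℝ, (exp (s • A))ᵀ = exp (s • Aᵀ) := by
    intro s; rw [← Matrix.transpose_smul, Matrix.exp_transpose]
  have hd1 : HasDerivAt (fun s : ℝ => exp (s • Aᵀ)) (Aᵀ * exp (t • Aᵀ)) t :=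
    hasDerivAt_exp_smul_const' (𝕂 := ℝ) Aᵀ t
  have hd2 : HasDerivAt (fun s : ℝ => exp (s • A)) (exp (t • A) * A) t :=
    hasDerivAt_exp_smul_const (𝕂 := ℝ) A t
  have hM : HasDerivAt (fun s : ℝ => exp (s • Aᵀ) * Q * exp (s • A))
      (Aᵀ * exp (t • Aᵀ) * Q * exp (t • A) +
        exp (t • Aᵀ) * Q * (exp (t • A) * A)) t := (hd1.mul_const Q).mul hd2
  let e : Matrix N N ℝ →ₗ[ℝ] ℝ :=
    (LinearMap.proj (R := ℝ) (φ := fun _ : N => ℝ) b).comp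
      (LinearMap.proj (R := ℝ) (φ := fun _ : N => N → ℝ) a)
  have hM2 := (LinearMap.toContinuousLinearMap e).hasFDerivAt.comp_hasDerivAt t hM
  simp only [h1]
  convert hM2 using 2
  show _ = (Aᵀ * exp (t • Aᵀ) * Q * exp (t • A) +
        exp (t • Aᵀ) * Q * (exp (t • A) * A)) a b
  simp only [mul_assoc]
  all_goals rfl

theorem derivExpEntry (A : Matrix N N ℝ) (t : ℝ) (a b : N) :
    HasDerivAt (fun s : ℝ => exp (s • A) a b) ((exp (t • A) * A) a b) t := by
  letI : SeminormedRing (Matrix N N ℝ) := Matrix.linftyOpSemiNormedRing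
  letI : NormedRing (Matrix N N ℝ) := Matrix.linftyOpNormedRing
  letI : NormedAlgebra ℝ (Matrix N N ℝ) := Matrix.linftyOpNormedAlgebra
  have hd : HasDerivAt (fun s : ℝ => exp (s • A)) (exp (t • A) * A) t :=
    hasDerivAt_exp_smul_const (𝕂 := ℝ) A t
  let e : Matrix N N ℝ →ₗ[ℝ] ℝ :=
    (LinearMap.proj (R := ℝ) (φ := fun _ : N => ℝ) b).comp
      (LinearMap.proj (R := ℝ) (φ := fun _ : N => N → ℝ) a)
  exact (LinearMap.toContinuousLinearMap e).hasFDerivAt.comp_hasDerivAt t hd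

theorem exp_mulVec_fixed (A : Matrix N N ℝ) (v : N → ℝ) (hv : A.mulVec v = 0) (t : ℝ) :
    (exp (t • A)).mulVec v = v := by
  funext a
  have hder : ∀ s : ℝ, HasDerivAt (fun u : ℝ => (exp (u • A)).mulVec v a) 0 s := by
    intro s
    have h : HasDerivAt (fun u : ℝ => ∑ b, exp (u • A) a b * v b)
        (∑ b, (exp (s • A) * A) a b * v b) s :=
      HasDerivAt.fun_sum fun b _ => (derivExpEntry A s a b).mul_const (v b)
    have h0 : (∑ b, (exp (s • A) * A) a b * v b) = 0 := by
      have h1 : (exp (s • A) * A).mulVec v = 0 := by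
        rw [← Matrix.mulVec_mulVec, hv, Matrix.mulVec_zero]
      simpa [Matrix.mulVec, dotProduct] using congrFun h1 a
    rw [h0] at h
    simpa [Matrix.mulVec, dotProduct] using h
  have hconst : (fun u : ℝ => (exp (u • A)).mulVec v a) t
      = (fun u : ℝ => (exp (u • A)).mulVec v a) 0 :=
    is_const_of_deriv_eq_zero (fun s => (hder s).differentiableAt)
      (fun s => (hder s).deriv) t 0
  simpa [zero_smul, exp_zero, Matrix.one_mulVec] using hconst

theorem trace_mul_nonneg' (A B : Matrix N N ℝ) (hA : A.PosSemidef) (hB : B.PosSemidef) :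
    0 ≤ (A * B).trace := by
  obtain ⟨S, hSS, hSsym⟩ : ∃ S : Matrix N N ℝ, S * S = B ∧ Sᵀ = S := by
    refine ⟨CFC.sqrt B, CFC.sqrt_mul_sqrt_self B (Matrix.nonneg_iff_posSemidef.mpr hB), ?_⟩
    have := (CFC.sqrt_nonneg B).isSelfAdjoint
    rwa [IsSelfAdjoint, Matrix.star_eq_conjTranspose,
      Matrix.conjTranspose_eq_transpose_of_trivial] at this
  have h1 : (A * B).trace = (S * (A * S)).trace := by
    rw [← hSS, ← Matrix.mul_assoc, Matrix.trace_mul_comm (A * S) S]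
  rw [h1, Matrix.trace]
  refine Finset.sum_nonneg fun i _ => ?_
  have h2 : (S * (A * S)).diag i = (fun j => S j i) ⬝ᵥ A.mulVec (fun j => S j i) := by
    simp only [Matrix.diag, Matrix.mul_apply, dotProduct, Matrix.mulVec]
    refine Finset.sum_congr rfl fun j _ => ?_
    have hsym : S i j = S j i := by
      conv_lhs => rw [← hSsym, Matrix.transpose_apply]
    rw [hsym]
  rw [h2]
  have := hA.dotProduct_mulVec_nonneg (fun j => S j i)
  simpa using this

theorem mp_facts {n : ℕ} (hn : 0 < n) (L Lp : Matrix (Fin n) (Fin n) ℝ)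
    (hLsym : Lᵀ = L) (hLpsd : L.PosSemidef)
    (hL1 : L.mulVec (fun _ => (1:ℝ)) = 0)
    (hker : ∀ x : Fin n → ℝ, L.mulVec x = 0 → ∃ c : ℝ, x = fun _ => c)
    (h1 : L * Lp * L = L) (h2 : Lp * L * Lp = Lp)
    (h3 : (L * Lp)ᵀ = L * Lp) (h4 : (Lp * L)ᵀ = Lp * L) :
    Lp * L = 1 - (n:ℝ)⁻¹ • Matrix.of (fun _ _ : Fin n => (1:ℝ)) ∧
    L * Lp = 1 - (n:ℝ)⁻¹ • Matrix.of (fun _ _ : Fin n => (1:ℝ)) ∧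
    Lpᵀ = Lp ∧ Lp.PosSemidef := by
  have i0 : Fin n := ⟨0, hn⟩
  have hNe : (n : ℝ) ≠ 0 := Nat.cast_ne_zero.mpr hn.ne'
  -- constant matrix helper
  have hconst : ∀ K : Matrix (Fin n) (Fin n) ℝ, L * K = 0 → Kᵀ = K →
      ∀ i j, K i j = K i0 i0 := by
    intro K hLK hKsym
    have hcol : ∀ j i i', K i j = K i' j := by
      intro j i i'
      have hc : L.mulVec (fun i => K i j) = 0 := by
        funext i
        have : (L * K) i j = 0 := by rw [hLK]; rfl
        simpa [Matrix.mul_apply, Matrix.mulVec, dotProduct] using this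
      obtain ⟨c, hc⟩ := hker _ hc
      have h1' := congrFun hc i
      have h2' := congrFun hc i'
      rw [h1', h2']
    have hsymm : ∀ i j, K i j = K j i := by
      intro i j; conv_lhs => rw [← hKsym, Matrix.transpose_apply]
    intro i j
    calc K i j = K i0 j := hcol j i i0
    _ = K j i0 := hsymm i0 j
    _ = K i0 i0 := hcol i0 j i0
  -- left projector
  have hKL : L * (1 - Lp * L) = 0 := by
    rw [Matrix.mul_sub, Matrix.mul_one, ← Matrix.mul_assoc, h1, sub_self]
  have hKLsym : (1 - Lp * L)ᵀ = 1 - Lp * L := by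
    rw [Matrix.transpose_sub, Matrix.transpose_one, h4]
  have hKLrow : ∀ i, ∑ j, (1 - Lp * L) i j = 1 := by
    intro i
    have : (1 - Lp * L).mulVec (fun _ => (1:ℝ)) = fun _ => (1:ℝ) := by
      rw [Matrix.sub_mulVec, ← Matrix.mulVec_mulVec, hL1, Matrix.mulVec_zero,
        Matrix.one_mulVec, sub_zero]
    have := congrFun this i
    simpa [Matrix.mulVec, dotProduct] using this
  have hγL : (1 - Lp * L) i0 i0 = (n : ℝ)⁻¹ := by
    have hsum := hKLrow i0
    have : ∑ j, (1 - Lp * L) i0 j = (n : ℝ) * (1 - Lp * L) i0 i0 := by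
      rw [Finset.sum_congr rfl fun j _ => hconst _ hKL hKLsym i0 j]
      simp [Finset.sum_const, mul_comm]
      ring
    rw [this] at hsum
    field_simp at hsum ⊢
    linarith
  have hJ1 : Lp * L = 1 - (n:ℝ)⁻¹ • Matrix.of (fun _ _ : Fin n => (1:ℝ)) := by
    have : (1 : Matrix (Fin n) (Fin n) ℝ) - (1 - Lp * L) = Lp * L := sub_sub_cancel 1 (Lp * L)
    rw [← this]
    congr 1
    ext i j
    rw [hconst _ hKL hKLsym i j, hγL]
    simp
  -- right projector
  have hKRL : (1 - L * Lp) * L = 0 := by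
    rw [Matrix.sub_mul, Matrix.one_mul, h1, sub_self]
  have hKRsym : (1 - L * Lp)ᵀ = 1 - L * Lp := by
    rw [Matrix.transpose_sub, Matrix.transpose_one, h3]
  have hKR : L * (1 - L * Lp) = 0 := by
    have h := congrArg Matrix.transpose hKRL
    rw [Matrix.transpose_mul, hLsym, hKRsym] at h
    simpa using h
  have hKRidem : (1 - L * Lp) * (1 - L * Lp) = 1 - L * Lp := by
    have hXX : (L * Lp) * (L * Lp) = L * Lp := by
      calc (L * Lp) * (L * Lp) = (L * Lp * L) * Lp := by
            rw [Matrix.mul_assoc (L * Lp) L Lp]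
      _ = L * Lp := by rw [h1]
    rw [Matrix.mul_sub, Matrix.mul_one, Matrix.sub_mul, Matrix.one_mul, hXX]
    abel
  have hγR : (1 - L * Lp) i0 i0 = (n : ℝ)⁻¹ := by
    have hidem : (n : ℝ) * ((1 - L * Lp) i0 i0 * (1 - L * Lp) i0 i0)
        = (1 - L * Lp) i0 i0 := by
      have h := congrFun (congrFun hKRidem i0) i0
      calc (n : ℝ) * ((1 - L * Lp) i0 i0 * (1 - L * Lp) i0 i0)
          = ∑ _k : Fin n, ((1 - L * Lp) i0 i0 * (1 - L * Lp) i0 i0) := by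
            simp [Finset.sum_const, mul_comm]
      _ = ∑ k, (1 - L * Lp) i0 k * (1 - L * Lp) k i0 := by
            refine Finset.sum_congr rfl fun k _ => ?_
            rw [hconst _ hKR hKRsym i0 k, hconst _ hKR hKRsym k i0]
      _ = (1 - L * Lp) i0 i0 := by rw [← Matrix.mul_apply, hKRidem]
    have hne : (1 - L * Lp) i0 i0 ≠ 0 := by
      intro h0
      have hLLp1 : L * Lp = 1 := by
        have : (1 : Matrix (Fin n) (Fin n) ℝ) - L * Lp = 0 := by
          ext i j
          rw [hconst _ hKR hKRsym i j, h0]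
          rfl
        have := congrArg (fun M => (1 : Matrix (Fin n) (Fin n) ℝ) - M) this
        simpa [sub_sub_cancel] using this
      have hzero : (fun _ => (1:ℝ)) ⬝ᵥ ((L * Lp) *ᵥ (fun _ => (1:ℝ))) = 0 := by
        rw [← Matrix.mulVec_mulVec, Matrix.dotProduct_mulVec]
        have hv : (fun _ => (1:ℝ)) ᵥ* L = 0 := by
          conv_lhs => rw [← hLsym]
          rw [Matrix.vecMul_transpose, hL1]
        rw [hv, zero_dotProduct]
      rw [hLLp1, Matrix.one_mulVec] at hzero
      simp [dotProduct] at hzero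
      exact hNe (by exact_mod_cast hzero)
    have hfac : ((n:ℝ) * (1 - L * Lp) i0 i0 - 1) * (1 - L * Lp) i0 i0 = 0 := by
      linear_combination hidem
    rcases mul_eq_zero.mp hfac with h | h
    · have hx1 : (n:ℝ) * (1 - L * Lp) i0 i0 = 1 := by linarith
      have h5 : ((n:ℝ))⁻¹ * ((n:ℝ) * (1 - L * Lp) i0 i0) = (n:ℝ)⁻¹ * 1 := by rw [hx1]
      rwa [← mul_assoc, inv_mul_cancel₀ hNe, one_mul, mul_one] at h5
    · exact absurd h hne
  have hJ2 : L * Lp = 1 - (n:ℝ)⁻¹ • Matrix.of (fun _ _ : Fin n => (1:ℝ)) := by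
    have h' : (1 : Matrix (Fin n) (Fin n) ℝ) - (1 - L * Lp) = L * Lp :=
      sub_sub_cancel 1 (L * Lp)
    rw [← h']
    congr 1
    ext i j
    rw [hconst _ hKR hKRsym i j, hγR]
    simp
  -- symmetry of Lp
  have hLpJ : Lp * (1 - (n:ℝ)⁻¹ • Matrix.of (fun _ _ : Fin n => (1:ℝ))) = Lp := by
    rw [← hJ2, ← Matrix.mul_assoc, h2]
  have hLLpT : L * Lpᵀ = 1 - (n:ℝ)⁻¹ • Matrix.of (fun _ _ : Fin n => (1:ℝ)) := by
    have : (Lp * L)ᵀ = Lᵀ * Lpᵀ := Matrix.transpose_mul Lp L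
    rw [h4, hJ1, hLsym] at this
    exact this.symm
  have hJT : (1 - (n:ℝ)⁻¹ • Matrix.of (fun _ _ : Fin n => (1:ℝ)))ᵀ
      = 1 - (n:ℝ)⁻¹ • Matrix.of (fun _ _ : Fin n => (1:ℝ)) := by
    rw [Matrix.transpose_sub, Matrix.transpose_one, Matrix.transpose_smul]
    congr 1
  set J : Matrix (Fin n) (Fin n) ℝ := 1 - (n:ℝ)⁻¹ • Matrix.of (fun _ _ : Fin n => (1:ℝ)) with hJdef
  have hLpsymm : Lpᵀ = Lp := by
    have e1 : Lp = J * Lpᵀ := by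
      calc Lp = Lp * J := hLpJ.symm
      _ = Lp * (L * Lpᵀ) := by rw [hLLpT]
      _ = (Lp * L) * Lpᵀ := (Matrix.mul_assoc Lp L Lpᵀ).symm
      _ = J * Lpᵀ := by rw [hJ1]
    have e2 : J * Lpᵀ = Lpᵀ := by
      calc J * Lpᵀ = Jᵀ * Lpᵀ := by rw [hJT]
      _ = (Lp * J)ᵀ := (Matrix.transpose_mul Lp J).symm
      _ = Lpᵀ := by rw [hLpJ]
    exact (e1.trans e2).symm
  have hLpPSD : Lp.PosSemidef := by
    refine Matrix.PosSemidef.of_dotProduct_mulVec_nonneg ?_ ?_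
    · show Lpᴴ = Lp
      rw [Matrix.conjTranspose_eq_transpose_of_trivial, hLpsymm]
    · intro x
      have hform : star x ⬝ᵥ Lp *ᵥ x = (Lp *ᵥ x) ⬝ᵥ (L *ᵥ (Lp *ᵥ x)) := by
        rw [star_trivial]
        conv_lhs => rw [← h2]
        rw [show ((Lp * L * Lp) *ᵥ x) = Lp *ᵥ (L *ᵥ (Lp *ᵥ x)) by
          rw [← Matrix.mulVec_mulVec, ← Matrix.mulVec_mulVec]]
        rw [Matrix.dotProduct_mulVec]
        congr 1
        conv_lhs => rw [← hLpsymm]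
        rw [Matrix.vecMul_transpose]
      rw [hform]
      have h6 := hLpsd.dotProduct_mulVec_nonneg (Lp *ᵥ x)
      rwa [star_trivial] at h6
  exact ⟨hJ1, hJ2, hLpsymm, hLpPSD⟩
end SwingAux

set_option maxHeartbeats 3200000 in
/-- **Convex upper bound for generic performance metrics** (Remark 1): for any output matrix
`C` with `CᵀC = blkdiag(Q₁, diag(q₂))`, every finite-horizon energy is bounded by
`(maxᵢ πᵢ) · (1/(2 minᵢ dᵢ)) · (trace(L⁺Q₁) + Σᵢ (q₂)ᵢ/mᵢ)`; in particular the improper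
integral converges and obeys the same bound, which is a convex function of the inertia
vector `m`. -/
theorem convex_upper_bound_generic_metric {n p : ℕ} (hn : 0 < n)
    (m d π : Fin n → ℝ) (hm : ∀ i, 0 < m i) (hd : ∀ i, 0 < d i) (hπ : ∀ i, 0 ≤ π i)
    (L : Matrix (Fin n) (Fin n) ℝ) (hLpsd : L.PosSemidef)
    (hker : ∀ x : Fin n → ℝ, L.mulVec x = 0 ↔ ∃ c : ℝ, x = fun _ => c)
    (Lp : Matrix (Fin n) (Fin n) ℝ) (hLp : IsMoorePenroseInv L Lp)
    (Q₁ : Matrix (Fin n) (Fin n) ℝ) (hQ₁ : Q₁.PosSemidef)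
    (hQ₁1 : Q₁.mulVec (fun _ => (1 : ℝ)) = 0)
    (q₂ : Fin n → ℝ) (hq₂ : ∀ i, 0 ≤ q₂ i)
    (C : Matrix (Fin p) (Fin n ⊕ Fin n) ℝ)
    (hC : Cᵀ * C = Matrix.fromBlocks Q₁ 0 0 (Matrix.diagonal q₂)) :
    (∀ T : ℝ, 0 ≤ T →
      (∫ t in (0:ℝ)..T,
          Matrix.trace ((C * NormedSpace.exp (t • swingA m d L) * swingB m π)ᵀ *
            (C * NormedSpace.exp (t • swingA m d L) * swingB m π))) ≤
        (⨆ i, π i) * (1 / (2 * ⨅ i, d i)) *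
          (Matrix.trace (Lp * Q₁) + ∑ i, q₂ i / m i)) ∧
    (∃ I : ℝ,
      Tendsto
        (fun T : ℝ => ∫ t in (0:ℝ)..T,
          Matrix.trace ((C * NormedSpace.exp (t • swingA m d L) * swingB m π)ᵀ *
            (C * NormedSpace.exp (t • swingA m d L) * swingB m π)))
        atTop (nhds I) ∧
      I ≤ (⨆ i, π i) * (1 / (2 * ⨅ i, d i)) *
          (Matrix.trace (Lp * Q₁) + ∑ i, q₂ i / m i)) ∧
    ConvexOn ℝ {m' : Fin n → ℝ | ∀ i, 0 < m' i}
      (fun m' => (⨆ i, π i) * (1 / (2 * ⨅ i, d i)) *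
        (Matrix.trace (Lp * Q₁) + ∑ i, q₂ i / m' i)) := by
  have i0 : Fin n := ⟨0, hn⟩
  haveI : Nonempty (Fin n) := ⟨i0⟩
  -- basic scalars
  set πmax := ⨆ i, π i with hπmaxdef
  set δ := ⨅ i, d i with hδdef
  have hδpos : 0 < δ := by
    obtain ⟨i, hi⟩ := exists_eq_ciInf_of_finite (f := d)
    rw [hδdef, ← hi]; exact hd i
  have hπle : ∀ i, π i ≤ πmax := fun i =>
    le_ciSup (Set.Finite.bddAbove (Set.finite_range π)) i
  have hδle : ∀ i, δ ≤ d i := fun i =>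
    ciInf_le (Set.Finite.bddBelow (Set.finite_range d)) i
  have hπmax0 : 0 ≤ πmax := le_trans (hπ i0) (hπle i0)
  have hc0 : 0 ≤ πmax * (1 / (2 * δ)) :=
    mul_nonneg hπmax0 (by positivity)
  -- MP facts
  have hLsym : Lᵀ = L := by
    have := hLpsd.1
    rwa [Matrix.IsHermitian, Matrix.conjTranspose_eq_transpose_of_trivial] at this
  have hL1 : L.mulVec (fun _ => (1:ℝ)) = 0 := (hker _).mpr ⟨1, rfl⟩
  obtain ⟨hJ1, hJ2, hLpsym, hLpPSD⟩ :=
    SwingAux.mp_facts hn L Lp hLsym hLpsd hL1 (fun x hx => (hker x).mp hx)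
      hLp.1 hLp.2.1 hLp.2.2.1 hLp.2.2.2
  have htrLpQ₁ : 0 ≤ (Lp * Q₁).trace := SwingAux.trace_mul_nonneg' Lp Q₁ hLpPSD hQ₁
  have hRHS0 : 0 ≤ πmax * (1 / (2 * δ)) * ((Lp * Q₁).trace + ∑ i, q₂ i / m i) := by
    refine mul_nonneg hc0 (add_nonneg htrLpQ₁ (Finset.sum_nonneg fun i _ => ?_))
    exact div_nonneg (hq₂ i) (hm i).le
  -- matrices
  set A := swingA m d L with hAdef
  set Bm := swingB m π with hBmdef
  set Q : Matrix (Fin n ⊕ Fin n) (Fin n ⊕ Fin n) ℝ :=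
    Matrix.fromBlocks Q₁ 0 0 (Matrix.diagonal q₂) with hQdef
  set F : ℝ → Matrix (Fin n ⊕ Fin n) (Fin n ⊕ Fin n) ℝ :=
    fun t => (NormedSpace.exp (t • A))ᵀ * Q * NormedSpace.exp (t • A) with hFdef
  have hFc : ∀ a b, Continuous fun t => F t a b := by
    intro a b
    rw [continuous_iff_continuousAt]
    exact fun t => (SwingAux.derivFentry A Q t a b).continuousAt
  have hGc : Continuous fun t => ∑ j, (π j * ((m j)⁻¹ * (m j)⁻¹)) * F t (Sum.inr j) (Sum.inr j) :=
    continuous_finset_sum _ fun j _ => (continuous_const.mul (hFc _ _))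
  have hFalt : ∀ t : ℝ, F t = (C * NormedSpace.exp (t • A))ᵀ *
      (C * NormedSpace.exp (t • A)) := by
    intro t
    show (NormedSpace.exp (t • A))ᵀ * Q * NormedSpace.exp (t • A) = _
    rw [← hC]
    rw [Matrix.transpose_mul C _]
    rw [Matrix.mul_assoc, Matrix.mul_assoc, Matrix.mul_assoc]
  have hFdiag : ∀ t (a : Fin n ⊕ Fin n), 0 ≤ F t a a := by
    intro t a
    rw [hFalt]
    rw [Matrix.mul_apply]
    refine Finset.sum_nonneg fun k _ => ?_
    rw [Matrix.transpose_apply]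
    exact mul_self_nonneg _
  have hIntegrand : ∀ t : ℝ,
      Matrix.trace ((C * NormedSpace.exp (t • A) * Bm)ᵀ *
          (C * NormedSpace.exp (t • A) * Bm))
        = ∑ j, (π j * ((m j)⁻¹ * (m j)⁻¹)) * F t (Sum.inr j) (Sum.inr j) := by
    intro t
    have hBapply : ∀ (a : Fin n ⊕ Fin n) (j : Fin n),
        Bm a j = if a = Sum.inr j then (m j)⁻¹ * Real.sqrt (π j) else 0 := by
      intro a j
      rcases a with k | k
      · simp [hBmdef, swingB]
      · by_cases h : k = j
        · subst h
          simp only [hBmdef, swingB, Matrix.fromRows_apply_inr, Matrix.diagonal_mul_diagonal]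
          rw [Matrix.diagonal_apply_eq]
          simp
        · simp only [hBmdef, swingB, Matrix.fromRows_apply_inr, Matrix.diagonal_mul_diagonal]
          rw [Matrix.diagonal_apply_ne _ h]
          simp [h]
    have h1 : (C * NormedSpace.exp (t • A) * Bm)ᵀ * (C * NormedSpace.exp (t • A) * Bm)
        = Bmᵀ * ((F t) * Bm) := by
      rw [hFalt t]
      rw [Matrix.transpose_mul (C * NormedSpace.exp (t • A)) Bm]
      rw [Matrix.mul_assoc, ← Matrix.mul_assoc ((C * NormedSpace.exp (t • A))ᵀ) _ Bm]
    rw [h1, Matrix.trace]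
    simp only [Matrix.diag_apply, Matrix.mul_apply, Matrix.transpose_apply, hBapply,
      ite_mul, mul_ite, mul_zero, zero_mul, Finset.sum_ite_eq', Finset.mem_univ, if_true]
    refine Finset.sum_congr rfl fun j _ => ?_
    have hs : Real.sqrt (π j) * Real.sqrt (π j) = π j := Real.mul_self_sqrt (hπ j)
    linear_combination ((m j)⁻¹ * (m j)⁻¹ * F t (Sum.inr j) (Sum.inr j)) * hs
  have hGnn : ∀ t, 0 ≤ ∑ j, (π j * ((m j)⁻¹ * (m j)⁻¹)) * F t (Sum.inr j) (Sum.inr j) := by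
    intro t
    refine Finset.sum_nonneg fun j _ => mul_nonneg (mul_nonneg (hπ j) ?_) (hFdiag t _)
    have := (hm j)
    positivity
  have key : ∀ T : ℝ, 0 ≤ T →
      (∫ t in (0:ℝ)..T, ∑ j, (π j * ((m j)⁻¹ * (m j)⁻¹)) * F t (Sum.inr j) (Sum.inr j)) ≤
        πmax * (1 / (2 * δ)) * ((Lp * Q₁).trace + ∑ i, q₂ i / m i) := by
    intro T hT
    set P : Matrix (Fin n ⊕ Fin n) (Fin n ⊕ Fin n) ℝ :=
      Matrix.of (fun a b => ∫ t in (0:ℝ)..T, F t a b) with hPdef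
    -- A entries
    have hA11 : ∀ i j : Fin n, A (Sum.inl i) (Sum.inl j) = 0 := by
      intro i j; rw [hAdef]; simp [swingA]
    have hA12 : ∀ i j : Fin n, A (Sum.inl i) (Sum.inr j) = if i = j then 1 else 0 := by
      intro i j; rw [hAdef]; simp [swingA, Matrix.one_apply]
    have hA21 : ∀ i j : Fin n, A (Sum.inr i) (Sum.inl j) = -((m i)⁻¹ * L i j) := by
      intro i j; rw [hAdef]
      simp [swingA, Matrix.mul_apply, Matrix.diagonal, ite_mul, zero_mul,
        Finset.sum_ite_eq, Finset.mem_univ]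
    have hA22 : ∀ i j : Fin n, A (Sum.inr i) (Sum.inr j)
        = -(if i = j then (m i)⁻¹ * d i else 0) := by
      intro i j; rw [hAdef]
      simp only [swingA, Matrix.fromBlocks_apply₂₂, Matrix.neg_apply,
        Matrix.diagonal_mul_diagonal]
      rw [Matrix.diagonal_apply]
    have hQ11 : ∀ i j : Fin n, Q (Sum.inl i) (Sum.inl j) = Q₁ i j := by
      intro i j; rw [hQdef]; rfl
    have hQ22 : ∀ i : Fin n, Q (Sum.inr i) (Sum.inr i) = q₂ i := by
      intro i; rw [hQdef]
      simp [Matrix.fromBlocks, Matrix.diagonal]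
    -- symmetry
    have hQsym : Qᵀ = Q := by
      rw [← hC, Matrix.transpose_mul, Matrix.transpose_transpose]
    have hFsymM : ∀ t : ℝ, (F t)ᵀ = F t := by
      intro t
      show ((NormedSpace.exp (t • A))ᵀ * Q * NormedSpace.exp (t • A))ᵀ = _
      rw [Matrix.transpose_mul, Matrix.transpose_mul, Matrix.transpose_transpose, hQsym,
        ← Matrix.mul_assoc]
    have hFsym : ∀ (t : ℝ) a b, F t a b = F t b a := by
      intro t a b
      conv_lhs => rw [← hFsymM t]
      rw [Matrix.transpose_apply]
    have hPsym : ∀ a b, P a b = P b a := by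
      intro a b
      show (∫ t in (0:ℝ)..T, F t a b) = ∫ t in (0:ℝ)..T, F t b a
      exact intervalIntegral.integral_congr fun t _ => hFsym t a b
    have hLentry : ∀ a b : Fin n, L a b = L b a := by
      intro a b; conv_lhs => rw [← hLsym, Matrix.transpose_apply]
    -- Lyapunov identity
    have hLyap : ∀ a b, (Aᵀ * P + P * A) a b = F T a b - Q a b := by
      intro a b
      have hderiv : ∀ t : ℝ, HasDerivAt (fun s : ℝ => F s a b)
          ((Aᵀ * F t + F t * A) a b) t := fun t => SwingAux.derivFentry A Q t a b
      have hc1 : Continuous fun t => (Aᵀ * F t) a b := by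
        simp only [Matrix.mul_apply]
        exact continuous_finset_sum _ fun k _ => continuous_const.mul (hFc k b)
      have hc2 : Continuous fun t => (F t * A) a b := by
        simp only [Matrix.mul_apply]
        exact continuous_finset_sum _ fun k _ => (hFc a k).mul continuous_const
      have hFTC : (∫ t in (0:ℝ)..T, (Aᵀ * F t + F t * A) a b) = F T a b - F 0 a b := by
        apply intervalIntegral.integral_eq_sub_of_hasDerivAt (fun t _ => hderiv t)
        apply Continuous.intervalIntegrable
        have : (fun t => (Aᵀ * F t + F t * A) a b)
            = fun t => (Aᵀ * F t) a b + (F t * A) a b := by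
          funext t; rw [Matrix.add_apply]
        rw [this]
        exact hc1.add hc2
      have hF0 : F 0 = Q := by
        show (NormedSpace.exp ((0:ℝ) • A))ᵀ * Q * NormedSpace.exp ((0:ℝ) • A) = Q
        rw [zero_smul, NormedSpace.exp_zero, Matrix.transpose_one, Matrix.one_mul,
          Matrix.mul_one]
      have hAP : (Aᵀ * P) a b = ∫ t in (0:ℝ)..T, (Aᵀ * F t) a b := by
        rw [Matrix.mul_apply]
        have hterm : ∀ k, Aᵀ a k * P k b = ∫ t in (0:ℝ)..T, Aᵀ a k * F t k b := fun k =>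
          (intervalIntegral.integral_const_mul _ _).symm
        rw [Finset.sum_congr rfl fun k _ => hterm k,
          ← intervalIntegral.integral_finset_sum]
        · exact intervalIntegral.integral_congr fun t _ => (Matrix.mul_apply).symm
        · exact fun k _ =>
            (continuous_const.mul (hFc k b)).intervalIntegrable (μ := MeasureTheory.volume) _ _
      have hPA : (P * A) a b = ∫ t in (0:ℝ)..T, (F t * A) a b := by
        rw [Matrix.mul_apply]
        have hterm : ∀ k, P a k * A k b = ∫ t in (0:ℝ)..T, F t a k * A k b := fun k =>
          (intervalIntegral.integral_mul_const _ _).symm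
        rw [Finset.sum_congr rfl fun k _ => hterm k,
          ← intervalIntegral.integral_finset_sum]
        · exact intervalIntegral.integral_congr fun t _ => (Matrix.mul_apply).symm
        · exact fun k _ =>
            ((hFc a k).mul continuous_const).intervalIntegrable (μ := MeasureTheory.volume) _ _
      rw [Matrix.add_apply, hAP, hPA, ← intervalIntegral.integral_add
        (hc1.intervalIntegrable (μ := MeasureTheory.volume) _ _)
        (hc2.intervalIntegrable (μ := MeasureTheory.volume) _ _)]
      rw [show (fun t => (Aᵀ * F t) a b + (F t * A) a b)
          = fun t => (Aᵀ * F t + F t * A) a b from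
        funext fun t => (Matrix.add_apply _ _ _ _).symm]
      rw [hFTC, hF0]
    -- kernel vector
    set v : (Fin n ⊕ Fin n) → ℝ := Sum.elim (fun _ => (1:ℝ)) (fun _ => 0) with hvdef
    have hLrow : ∀ i, ∑ j, L i j = 0 := by
      intro i
      have := congrFun hL1 i
      simpa [Matrix.mulVec, dotProduct] using this
    have hAv : A.mulVec v = 0 := by
      funext a
      rcases a with i | i
      · simp [Matrix.mulVec, dotProduct, Fintype.sum_sum_type, hvdef, hA11, hA12]
      · show (A.mulVec v) (Sum.inr i) = 0
        have h2 : (A.mulVec v) (Sum.inr i) = ∑ j, A (Sum.inr i) (Sum.inl j) := by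
          simp [Matrix.mulVec, dotProduct, Fintype.sum_sum_type, hvdef]
        rw [h2, Finset.sum_congr rfl fun j (_ : j ∈ Finset.univ) => hA21 i j,
          Finset.sum_neg_distrib, ← Finset.mul_sum, hLrow i, mul_zero, neg_zero]
    have hQv : Q.mulVec v = 0 := by
      funext a
      rcases a with i | i
      · have := congrFun hQ₁1 i
        simp only [Matrix.mulVec, dotProduct] at this ⊢
        rw [hQdef]
        simpa [Fintype.sum_sum_type, hvdef, Matrix.fromBlocks] using this
      · rw [hQdef]
        simp [Matrix.mulVec, dotProduct, Fintype.sum_sum_type, hvdef,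
          Matrix.fromBlocks]
    have hexpv : ∀ t : ℝ, (NormedSpace.exp (t • A)).mulVec v = v := fun t =>
      SwingAux.exp_mulVec_fixed A v hAv t
    have hFv : ∀ t : ℝ, (F t).mulVec v = 0 := by
      intro t
      show ((NormedSpace.exp (t • A))ᵀ * Q * NormedSpace.exp (t • A)).mulVec v = 0
      rw [← Matrix.mulVec_mulVec, hexpv, ← Matrix.mulVec_mulVec, hQv, Matrix.mulVec_zero]
    have hPv : P.mulVec v = 0 := by
      funext a
      have hrw : P.mulVec v a = ∫ t in (0:ℝ)..T, (F t).mulVec v a := by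
        simp only [Matrix.mulVec, dotProduct]
        have hterm : ∀ b, P a b * v b = ∫ t in (0:ℝ)..T, F t a b * v b := fun b =>
          (intervalIntegral.integral_mul_const _ _).symm
        rw [Finset.sum_congr rfl fun b _ => hterm b, ← intervalIntegral.integral_finset_sum]
        exact fun b _ =>
          ((hFc a b).mul continuous_const).intervalIntegrable (μ := MeasureTheory.volume) _ _
      rw [hrw]
      simp [hFv]
    -- scalar quantities
    have hznn : ∀ i : Fin n, 0 ≤ P (Sum.inr i) (Sum.inr i) := by
      intro i
      show 0 ≤ ∫ t in (0:ℝ)..T, F t (Sum.inr i) (Sum.inr i)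
      exact intervalIntegral.integral_nonneg hT fun u _ => hFdiag u _
    -- (Ei) identity
    have hEi : ∀ i : Fin n,
        2 * P (Sum.inr i) (Sum.inl i) - 2 * ((m i)⁻¹ * d i) * P (Sum.inr i) (Sum.inr i)
          = F T (Sum.inr i) (Sum.inr i) - q₂ i := by
      intro i
      have hAPe : (Aᵀ * P) (Sum.inr i) (Sum.inr i)
          = P (Sum.inl i) (Sum.inr i) - (m i)⁻¹ * d i * P (Sum.inr i) (Sum.inr i) := by
        rw [Matrix.mul_apply, Fintype.sum_sum_type]
        simp only [Matrix.transpose_apply, hA12, hA22, ite_mul, neg_mul, one_mul, zero_mul,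
          Finset.sum_neg_distrib, Finset.sum_ite_eq', Finset.mem_univ, if_true]
        ring
      have hPAe : (P * A) (Sum.inr i) (Sum.inr i)
          = P (Sum.inr i) (Sum.inl i) - (m i)⁻¹ * d i * P (Sum.inr i) (Sum.inr i) := by
        rw [Matrix.mul_apply, Fintype.sum_sum_type]
        simp only [hA12, hA22, mul_ite, mul_neg, mul_one, mul_zero,
          Finset.sum_neg_distrib, Finset.sum_ite_eq', Finset.mem_univ, if_true]
        ring
      have h := hLyap (Sum.inr i) (Sum.inr i)
      rw [Matrix.add_apply, hAPe, hPAe, hQ22 i] at h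
      have hps := hPsym (Sum.inl i) (Sum.inr i)
      linarith [h]
    -- (EII) identity
    set Yt : Matrix (Fin n) (Fin n) ℝ :=
      Matrix.of (fun k j => (m k)⁻¹ * P (Sum.inr k) (Sum.inl j)) with hYtdef
    set G11 : Matrix (Fin n) (Fin n) ℝ :=
      Matrix.of (fun i j => F T (Sum.inl i) (Sum.inl j)) with hG11def
    have hEII : L * Yt + Ytᵀ * L = Q₁ - G11 := by
      ext i j
      have hAPe : (Aᵀ * P) (Sum.inl i) (Sum.inl j)
          = -∑ k, L i k * ((m k)⁻¹ * P (Sum.inr k) (Sum.inl j)) := by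
        rw [Matrix.mul_apply, Fintype.sum_sum_type]
        simp only [Matrix.transpose_apply, hA11, hA21, zero_mul, neg_mul,
          Finset.sum_const_zero, zero_add, Finset.sum_neg_distrib]
        refine congrArg Neg.neg (Finset.sum_congr rfl fun k _ => ?_)
        rw [hLentry k i]; ring
      have hPAe : (P * A) (Sum.inl i) (Sum.inl j)
          = -∑ k, ((m k)⁻¹ * P (Sum.inr k) (Sum.inl i)) * L k j := by
        rw [Matrix.mul_apply, Fintype.sum_sum_type]
        simp only [hA11, hA21, mul_zero, mul_neg, Finset.sum_const_zero, zero_add,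
          Finset.sum_neg_distrib]
        refine congrArg Neg.neg (Finset.sum_congr rfl fun k _ => ?_)
        rw [hPsym (Sum.inl i) (Sum.inr k)]; ring
      have h := hLyap (Sum.inl i) (Sum.inl j)
      rw [Matrix.add_apply, hAPe, hPAe, hQ11 i j] at h
      rw [Matrix.add_apply, Matrix.mul_apply, Matrix.mul_apply, Matrix.sub_apply]
      have hT1 : (∑ k, L i k * Yt k j) = ∑ k, L i k * ((m k)⁻¹ * P (Sum.inr k) (Sum.inl j)) :=
        Finset.sum_congr rfl fun k _ => rfl
      have hT2 : (∑ k, Ytᵀ i k * L k j) = ∑ k, ((m k)⁻¹ * P (Sum.inr k) (Sum.inl i)) * L k j :=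
        Finset.sum_congr rfl fun k _ => rfl
      rw [hT1, hT2, show G11 i j = F T (Sum.inl i) (Sum.inl j) from rfl]
      linarith [h]
    -- row sums of Yt vanish
    have hYtrow : ∀ k, ∑ j, Yt k j = 0 := by
      intro k
      have hpk := congrFun hPv (Sum.inr k)
      simp only [Matrix.mulVec, dotProduct, Fintype.sum_sum_type, hvdef,
        Sum.elim_inl, Sum.elim_inr, mul_one, mul_zero, Finset.sum_const_zero, add_zero,
        Pi.zero_apply] at hpk
      have : ∑ j, Yt k j = (m k)⁻¹ * ∑ j, P (Sum.inr k) (Sum.inl j) := by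
        rw [Finset.mul_sum]
        exact Finset.sum_congr rfl fun j _ => rfl
      rw [this, hpk, mul_zero]
    -- G11 is PSD
    have hG11psd : G11.PosSemidef := by
      refine Matrix.PosSemidef.of_dotProduct_mulVec_nonneg ?_ ?_
      · show G11ᴴ = G11
        rw [Matrix.conjTranspose_eq_transpose_of_trivial]
        ext i j
        rw [Matrix.transpose_apply]
        exact hFsym T (Sum.inl j) (Sum.inl i)
      · intro x
        have hquad : star x ⬝ᵥ G11 *ᵥ x
            = (Sum.elim x 0) ⬝ᵥ (F T) *ᵥ (Sum.elim x 0) := by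
          simp only [star_trivial, dotProduct, Matrix.mulVec,
            Fintype.sum_sum_type, Sum.elim_inl, Sum.elim_inr, Pi.zero_apply, mul_zero,
            zero_mul, Finset.sum_const_zero, add_zero]
          rfl
        rw [hquad, hFalt T, ← Matrix.mulVec_mulVec, Matrix.dotProduct_mulVec,
          Matrix.vecMul_transpose]
        exact Finset.sum_nonneg fun k _ => mul_self_nonneg _
    -- trace identity
    have htrYt : 2 * Yt.trace = (Lp * Q₁).trace - (Lp * G11).trace := by
      have h := congrArg (fun M => (Lp * M).trace) hEII
      simp only [Matrix.mul_add, Matrix.trace_add, Matrix.mul_sub, Matrix.trace_sub] at h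
      have hO : ∀ W : Matrix (Fin n) (Fin n) ℝ, (∑ k, ∑ i, W k i) = 0 →
          ((Matrix.of fun _ _ : Fin n => (1:ℝ)) * W).trace = 0 := by
        intro W hW
        rw [Matrix.trace]
        have hdiag : ∀ i, ((Matrix.of fun _ _ : Fin n => (1:ℝ)) * W).diag i = ∑ k, W k i := by
          intro i; simp [Matrix.diag, Matrix.mul_apply]
        rw [Finset.sum_congr rfl fun i _ => hdiag i, Finset.sum_comm, hW]
      have hOYt : ((Matrix.of fun _ _ : Fin n => (1:ℝ)) * Yt).trace = 0 := by
        refine hO Yt ?_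
        rw [Finset.sum_congr rfl fun k (_ : k ∈ Finset.univ) => hYtrow k,
          Finset.sum_const_zero]
      have hOYtT : ((Matrix.of fun _ _ : Fin n => (1:ℝ)) * Ytᵀ).trace = 0 := by
        refine hO Ytᵀ ?_
        have hTT : (∑ k, ∑ i, Ytᵀ k i) = ∑ k, ∑ i, Yt i k :=
          Finset.sum_congr rfl fun k _ => Finset.sum_congr rfl fun i _ => rfl
        rw [hTT, Finset.sum_comm]
        rw [Finset.sum_congr rfl fun k (_ : k ∈ Finset.univ) => hYtrow k,
          Finset.sum_const_zero]
      have e1 : (Lp * (L * Yt)).trace = Yt.trace := by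
        rw [← Matrix.mul_assoc, hJ1, Matrix.sub_mul, Matrix.one_mul, Matrix.trace_sub,
          Matrix.smul_mul, Matrix.trace_smul, hOYt, smul_zero, sub_zero]
      have e2 : (Lp * (Ytᵀ * L)).trace = Yt.trace := by
        rw [← Matrix.mul_assoc, Matrix.trace_mul_cycle, hJ2, Matrix.sub_mul,
          Matrix.one_mul, Matrix.trace_sub, Matrix.smul_mul, Matrix.trace_smul,
          hOYtT, smul_zero, sub_zero, Matrix.trace_transpose]
      rw [e1, e2] at h
      linarith [h]
    have hYttr : Yt.trace = ∑ k, (m k)⁻¹ * P (Sum.inr k) (Sum.inl k) := by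
      rw [Matrix.trace]
      exact Finset.sum_congr rfl fun k _ => rfl
    have htrG11 : 0 ≤ (Lp * G11).trace := SwingAux.trace_mul_nonneg' Lp G11 hLpPSD hG11psd
    -- compute the integral
    have hET : (∫ t in (0:ℝ)..T,
        ∑ j, (π j * ((m j)⁻¹ * (m j)⁻¹)) * F t (Sum.inr j) (Sum.inr j))
        = ∑ j, (π j * ((m j)⁻¹ * (m j)⁻¹)) * P (Sum.inr j) (Sum.inr j) := by
      rw [intervalIntegral.integral_finset_sum]
      · exact Finset.sum_congr rfl fun j _ => intervalIntegral.integral_const_mul _ _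
      · exact fun j _ =>
          (continuous_const.mul (hFc _ _)).intervalIntegrable (μ := MeasureTheory.volume) _ _
    rw [hET]
    -- final chain of inequalities
    have hstep1 : ∀ j : Fin n,
        (π j * ((m j)⁻¹ * (m j)⁻¹)) * P (Sum.inr j) (Sum.inr j)
          ≤ πmax * (1 / (2 * δ)) *
            ((q₂ j + 2 * P (Sum.inr j) (Sum.inl j) - F T (Sum.inr j) (Sum.inr j)) * (m j)⁻¹) := by
      intro j
      have hEij := hEi j
      have hw : q₂ j + 2 * P (Sum.inr j) (Sum.inl j) - F T (Sum.inr j) (Sum.inr j)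
          = 2 * ((m j)⁻¹ * d j) * P (Sum.inr j) (Sum.inr j) := by linarith [hEij]
      rw [hw]
      have hπd : π j * δ ≤ πmax * d j :=
        mul_le_mul (hπle j) (hδle j) hδpos.le hπmax0
      have hmj := hm j
      have hdj := hd j
      have hzj := hznn j
      have lhs_eq : (π j * ((m j)⁻¹ * (m j)⁻¹)) * P (Sum.inr j) (Sum.inr j)
          = (π j * δ) * (δ⁻¹ * (((m j)⁻¹ * (m j)⁻¹) * P (Sum.inr j) (Sum.inr j))) := by
        field_simp
      have rhs_eq : πmax * (1 / (2 * δ)) *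
          ((2 * ((m j)⁻¹ * d j) * P (Sum.inr j) (Sum.inr j)) * (m j)⁻¹)
          = (πmax * d j) * (δ⁻¹ * (((m j)⁻¹ * (m j)⁻¹) * P (Sum.inr j) (Sum.inr j))) := by
        field_simp
      rw [lhs_eq, rhs_eq]
      refine mul_le_mul_of_nonneg_right hπd ?_
      have : (0:ℝ) ≤ ((m j)⁻¹ * (m j)⁻¹) * P (Sum.inr j) (Sum.inr j) := by positivity
      positivity
    calc (∑ j, (π j * ((m j)⁻¹ * (m j)⁻¹)) * P (Sum.inr j) (Sum.inr j))
        ≤ ∑ j, πmax * (1 / (2 * δ)) *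
            ((q₂ j + 2 * P (Sum.inr j) (Sum.inl j) - F T (Sum.inr j) (Sum.inr j)) * (m j)⁻¹) :=
          Finset.sum_le_sum fun j _ => hstep1 j
      _ = πmax * (1 / (2 * δ)) * ∑ j,
            ((q₂ j + 2 * P (Sum.inr j) (Sum.inl j) - F T (Sum.inr j) (Sum.inr j)) * (m j)⁻¹) := by
          rw [Finset.mul_sum]
      _ ≤ πmax * (1 / (2 * δ)) *
            ((Lp * Q₁).trace + ∑ i, q₂ i / m i) := by
          refine mul_le_mul_of_nonneg_left ?_ hc0
          have hexpand : ∑ j,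
              ((q₂ j + 2 * P (Sum.inr j) (Sum.inl j) - F T (Sum.inr j) (Sum.inr j)) * (m j)⁻¹)
              ≤ (∑ j, q₂ j * (m j)⁻¹) + 2 * ∑ j, (m j)⁻¹ * P (Sum.inr j) (Sum.inl j) := by
            have h1 : ∀ j : Fin n,
                (q₂ j + 2 * P (Sum.inr j) (Sum.inl j) - F T (Sum.inr j) (Sum.inr j)) * (m j)⁻¹
                  ≤ q₂ j * (m j)⁻¹ + 2 * ((m j)⁻¹ * P (Sum.inr j) (Sum.inl j)) := by
              intro j
              have hg := hFdiag T (Sum.inr j)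
              have hmj : (0:ℝ) < (m j)⁻¹ := by
                have := hm j; positivity
              nlinarith [hg, hmj]
            calc ∑ j, ((q₂ j + 2 * P (Sum.inr j) (Sum.inl j) - F T (Sum.inr j) (Sum.inr j)) * (m j)⁻¹)
                ≤ ∑ j, (q₂ j * (m j)⁻¹ + 2 * ((m j)⁻¹ * P (Sum.inr j) (Sum.inl j))) :=
                  Finset.sum_le_sum fun j _ => h1 j
              _ = (∑ j, q₂ j * (m j)⁻¹) + 2 * ∑ j, (m j)⁻¹ * P (Sum.inr j) (Sum.inl j) := by
                  rw [Finset.sum_add_distrib, Finset.mul_sum]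
          have htr2 : 2 * ∑ j, (m j)⁻¹ * P (Sum.inr j) (Sum.inl j) ≤ (Lp * Q₁).trace := by
            rw [← hYttr]
            linarith [htrYt, htrG11]
          have hdiv : ∑ i, q₂ i / m i = ∑ j, q₂ j * (m j)⁻¹ :=
            Finset.sum_congr rfl fun j _ => div_eq_mul_inv _ _
          rw [hdiv]
          linarith [hexpand, htr2]
  have hEeq : (fun T : ℝ => ∫ t in (0:ℝ)..T,
      Matrix.trace ((C * NormedSpace.exp (t • A) * Bm)ᵀ *
          (C * NormedSpace.exp (t • A) * Bm)))
      = fun T : ℝ => ∫ t in (0:ℝ)..T,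
        ∑ j, (π j * ((m j)⁻¹ * (m j)⁻¹)) * F t (Sum.inr j) (Sum.inr j) := by
    funext T
    exact intervalIntegral.integral_congr fun t _ => hIntegrand t
  refine ⟨?_, ?_, ?_⟩
  · intro T hT
    calc (∫ t in (0:ℝ)..T,
          Matrix.trace ((C * NormedSpace.exp (t • A) * Bm)ᵀ *
            (C * NormedSpace.exp (t • A) * Bm)))
        = ∫ t in (0:ℝ)..T,
            ∑ j, (π j * ((m j)⁻¹ * (m j)⁻¹)) * F t (Sum.inr j) (Sum.inr j) := congrFun hEeq T
      _ ≤ _ := key T hT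
  · -- convergence
    set E : ℝ → ℝ := fun T : ℝ => ∫ t in (0:ℝ)..T,
        ∑ j, (π j * ((m j)⁻¹ * (m j)⁻¹)) * F t (Sum.inr j) (Sum.inr j) with hEdef
    have hmono : Monotone E := by
      intro T₁ T₂ h
      have hadd := intervalIntegral.integral_add_adjacent_intervals
        (a := (0:ℝ)) (b := T₁) (c := T₂)
        (hGc.intervalIntegrable (μ := MeasureTheory.volume) 0 T₁)
        (hGc.intervalIntegrable (μ := MeasureTheory.volume) T₁ T₂)
      have hpos : 0 ≤ ∫ t in T₁..T₂,
          ∑ j, (π j * ((m j)⁻¹ * (m j)⁻¹)) * F t (Sum.inr j) (Sum.inr j) :=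
        intervalIntegral.integral_nonneg h (fun u _ => hGnn u)
      show E T₁ ≤ E T₂
      rw [hEdef]
      simp only [← hadd]
      linarith
    have hbdd : ∀ T, E T ≤ πmax * (1 / (2 * δ)) * ((Lp * Q₁).trace + ∑ i, q₂ i / m i) := by
      intro T
      rcases le_or_gt 0 T with h | h
      · exact key T h
      · have : E T ≤ E 0 := hmono h.le
        have hE0 : E 0 = 0 := intervalIntegral.integral_same
        calc E T ≤ E 0 := this
          _ = 0 := hE0
          _ ≤ _ := hRHS0
    refine ⟨⨆ T, E T, ?_, ?_⟩
    · rw [hEeq]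
      exact tendsto_atTop_ciSup hmono ⟨_, Set.forall_mem_range.mpr hbdd⟩
    · exact ciSup_le hbdd
  · -- convexity
    set S : Set (Fin n → ℝ) := {m' : Fin n → ℝ | ∀ i, 0 < m' i} with hSdef
    have hSconv : Convex ℝ S := by
      have hSeq : S = Set.pi Set.univ (fun _ : Fin n => Set.Ioi (0:ℝ)) := by
        ext x; simp [Set.mem_pi, hSdef]
      rw [hSeq]
      exact convex_pi fun _ _ => convex_Ioi 0
    have hbase : ConvexOn ℝ (Set.Ioi (0:ℝ)) (fun x : ℝ => x⁻¹) := by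
      have h := (strictConvexOn_zpow (m := -1) (by decide) (by decide)).convexOn
      simpa using h
    have hterm : ∀ j : Fin n, ConvexOn ℝ S (fun m' : Fin n → ℝ => (m' j)⁻¹) := by
      intro j
      have hcomp := hbase.comp_affineMap
        ((LinearMap.proj (R := ℝ) (φ := fun _ : Fin n => ℝ) j).toAffineMap)
      refine ConvexOn.subset ?_ (fun x hx => hx j) hSconv
      exact hcomp
    set c0 : ℝ := πmax * (1 / (2 * δ)) with hc0def
    have hsum : ∀ s : Finset (Fin n), ConvexOn ℝ S
        (fun m' : Fin n → ℝ => ∑ j ∈ s, (c0 * q₂ j) * (m' j)⁻¹) := by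
      intro s
      induction s using Finset.induction with
      | empty => simpa using convexOn_const 0 hSconv
      | @insert a s ha ih =>
        have hconv := ((hterm a).smul (c := c0 * q₂ a)
          (mul_nonneg hc0 (hq₂ a))).add ih
        simp only [smul_eq_mul] at hconv
        simp only [Finset.sum_insert ha]
        exact hconv
    have hfin := (convexOn_const (c := c0 * (Lp * Q₁).trace) hSconv).add (hsum Finset.univ)
    have hfuneq : (fun m' : Fin n → ℝ => c0 * ((Lp * Q₁).trace + ∑ i, q₂ i / m' i))
        = fun m' : Fin n → ℝ => c0 * (Lp * Q₁).trace + ∑ j, (c0 * q₂ j) * (m' j)⁻¹ := by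
      funext m'
      rw [mul_add, Finset.mul_sum]
      congr 1
      refine Finset.sum_congr rfl fun j _ => ?_
      rw [div_eq_mul_inv]; ring
    rw [hc0def] at hfuneq
    rw [show (fun m' : Fin n → ℝ => πmax * (1 / (2 * δ)) *
        ((Lp * Q₁).trace + ∑ i, q₂ i / m' i)) = _ from hfuneq]
    rw [hc0def] at hfin
    exact hfin
end
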